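/- arXiv:2012.15193 — 7 statements merged into one kernel-verified Lean document; each statement's English description precedes it below -/
import Mathlib

section
/- The domination polynomial of the complete bipartite graph K_{k,ℓ} is D(K_{k,ℓ}, x) = ((1+x)^k - 1)((1+x)^ℓ - 1) + x^k + x^ℓ. -/
open Finset

open scoped Classical in
noncomputable def domPoly {V : Type*} [Fintype V] (G : SimpleGraph V) (x : ℝ) : ℝ :=
  ∑ S ∈ Finset.univ.powerset.filter
      (fun S : Finset V => ∀ v : V, v ∈ S ∨ ∃ u ∈ S, G.Adj u v), x ^ S.card

open scoped Classical in
lemma sum_pow_card' {A : Type*} (s : Finset A) (x : ℝ) :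
    ∑ t ∈ s.powerset, x ^ t.card = (x + 1) ^ s.card := by
  have := Finset.prod_add (fun _ : A => x) (fun _ : A => 1) s
  simpa using this.symm

theorem domPoly_completeBipartite (k l : ℕ) (hk : 1 ≤ k) (hl : 1 ≤ l) (x : ℝ) :
    domPoly (completeBipartiteGraph (Fin k) (Fin l)) x =
      ((1 + x) ^ k - 1) * ((1 + x) ^ l - 1) + x ^ k + x ^ l := by
  classical
  set G := completeBipartiteGraph (Fin k) (Fin l)
  set L : Finset (Fin k ⊕ Fin l) := Finset.univ.map ⟨Sum.inl, Sum.inl_injective⟩ with hL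
  set R : Finset (Fin k ⊕ Fin l) := Finset.univ.map ⟨Sum.inr, Sum.inr_injective⟩ with hR
  have hLcard : L.card = k := by simp [hL]
  have hRcard : R.card = l := by simp [hR]
  have hmemL : ∀ (S : Finset (Fin k ⊕ Fin l)), S ⊆ L ↔ ∀ b : Fin l, Sum.inr b ∉ S := by
    intro S
    constructor
    · intro h b hb
      have := h hb
      simp [hL] at this
    · intro h v hv
      rcases v with a | b
      · simp [hL]
      · exact absurd hv (h b)
  have hmemR : ∀ (S : Finset (Fin k ⊕ Fin l)), S ⊆ R ↔ ∀ a : Fin k, Sum.inl a ∉ S := by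
    intro S
    constructor
    · intro h a ha
      have := h ha
      simp [hR] at this
    · intro h v hv
      rcases v with a | b
      · exact absurd hv (h a)
      · simp [hR]
  -- characterize non-dominating sets
  have hchar : ∀ S : Finset (Fin k ⊕ Fin l),
      (¬ ∀ v : (Fin k ⊕ Fin l), v ∈ S ∨ ∃ u ∈ S, G.Adj u v) ↔
        (S ⊆ L ∧ S ≠ L) ∨ (S ⊆ R ∧ S ≠ R) := by
    intro S
    constructor
    · intro h
      push_neg at h
      obtain ⟨v, hvS, hvd⟩ := h
      rcases v with a | b
      · left
        have hsub : S ⊆ L := by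
          rw [hmemL]
          intro b hb
          exact hvd _ hb (by simp [G])
        refine ⟨hsub, ?_⟩
        intro hEq
        exact hvS (hEq ▸ (by simp [hL]))
      · right
        have hsub : S ⊆ R := by
          rw [hmemR]
          intro a ha
          exact hvd _ ha (by simp [G])
        refine ⟨hsub, ?_⟩
        intro hEq
        exact hvS (hEq ▸ (by simp [hR]))
    · rintro (⟨hsub, hne⟩ | ⟨hsub, hne⟩) h
      · obtain ⟨v, hvL, hvS⟩ := Finset.exists_of_ssubset (hsub.ssubset_of_ne hne)
        rcases h v with hv | ⟨u, huS, hadj⟩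
        · exact hvS hv
        · rcases v with a | b
          · -- u must be inr, but S ⊆ L
            rcases u with a' | b'
            · simp [G] at hadj
            · exact (hmemL S).1 hsub b' huS
          · simp [hL] at hvL
      · obtain ⟨v, hvR, hvS⟩ := Finset.exists_of_ssubset (hsub.ssubset_of_ne hne)
        rcases h v with hv | ⟨u, huS, hadj⟩
        · exact hvS hv
        · rcases v with a | b
          · simp [hR] at hvR
          · rcases u with a' | b'
            · exact (hmemR S).1 hsub a' huS
            · simp [G] at hadj
  -- total sum minus non-dominating
  have key := Finset.sum_filter_add_sum_filter_not (Finset.univ.powerset : Finset (Finset (Fin k ⊕ Fin l)))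
      (fun S : Finset (Fin k ⊕ Fin l) => ∀ v : (Fin k ⊕ Fin l), v ∈ S ∨ ∃ u ∈ S, G.Adj u v)
      (fun S : Finset (Fin k ⊕ Fin l) => x ^ S.card)
  have htot : ∑ S ∈ (Finset.univ.powerset : Finset (Finset (Fin k ⊕ Fin l))), x ^ S.card
      = (x + 1) ^ (k + l) := by
    rw [sum_pow_card']
    congr 1
    simp
  have hbadset : (Finset.univ.powerset : Finset (Finset (Fin k ⊕ Fin l))).filter
      (fun S : Finset (Fin k ⊕ Fin l) => ¬ ∀ v : (Fin k ⊕ Fin l), v ∈ S ∨ ∃ u ∈ S, G.Adj u v)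
      = (L.powerset.erase L) ∪ (R.powerset.erase R) := by
    ext S
    simp only [Finset.mem_filter, Finset.mem_powerset, Finset.mem_union, Finset.mem_erase,
      Finset.subset_univ, true_and]
    rw [hchar S]
    tauto
  have hdisj : (L.powerset.erase L) ∩ (R.powerset.erase R) = {∅} := by
    ext S
    simp only [Finset.mem_inter, Finset.mem_erase, Finset.mem_powerset, Finset.mem_singleton]
    constructor
    · rintro ⟨⟨hne1, h1⟩, hne2, h2⟩
      have : S ⊆ L ∩ R := Finset.subset_inter h1 h2
      have hLR : L ∩ R = ∅ := by
        ext v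
        rcases v with a | b <;> simp [hL, hR]
      rw [hLR, Finset.subset_empty] at this
      exact this
    · rintro rfl
      refine ⟨⟨?_, Finset.empty_subset _⟩, ?_, Finset.empty_subset _⟩
      · intro h
        have : L.card = 0 := by rw [← h]; simp
        omega
      · intro h
        have : R.card = 0 := by rw [← h]; simp
        omega
  have hsumL : ∑ S ∈ L.powerset.erase L, x ^ S.card = (x + 1) ^ k - x ^ k := by
    have := Finset.sum_erase_eq_sub (f := fun S : Finset (Fin k ⊕ Fin l) => x ^ S.card)
      (Finset.mem_powerset_self L)
    rw [this, sum_pow_card', hLcard]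
  have hsumR : ∑ S ∈ R.powerset.erase R, x ^ S.card = (x + 1) ^ l - x ^ l := by
    have := Finset.sum_erase_eq_sub (f := fun S : Finset (Fin k ⊕ Fin l) => x ^ S.card)
      (Finset.mem_powerset_self R)
    rw [this, sum_pow_card', hRcard]
  have hunion : ∑ S ∈ (L.powerset.erase L) ∪ (R.powerset.erase R), x ^ S.card
      = ((x + 1) ^ k - x ^ k) + ((x + 1) ^ l - x ^ l) - 1 := by
    have h2 := Finset.sum_union_inter (s₁ := L.powerset.erase L) (s₂ := R.powerset.erase R)
      (f := fun S : Finset (Fin k ⊕ Fin l) => x ^ S.card)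
    rw [hdisj] at h2
    simp only [Finset.sum_singleton, Finset.card_empty, pow_zero] at h2
    rw [hsumL, hsumR] at h2
    linarith
  have hD : domPoly G x = (x + 1) ^ (k + l)
      - (((x + 1) ^ k - x ^ k) + ((x + 1) ^ l - x ^ l) - 1) := by
    unfold domPoly
    rw [← htot, ← key, hbadset, hunion]
    ring_nf
    refine Finset.sum_congr ?_ (fun _ _ => rfl)
    ext S
    simp only [Finset.mem_filter]
  rw [hD, pow_add]
  ring
end

section
/- For any graph G and any n ≥ 1, the domination polynomial satisfies D(G[K_n], x) = D(G, (1+x)^n - 1), where G[K_n] is the lexicographic substitution of the complete graph K_n into each vertex of G. -/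
open Finset

/-- The substitution `G[K n]`: replace each vertex of `G` by a clique of size `n`. -/
def compSub {V : Type*} (G : SimpleGraph V) (n : ℕ) : SimpleGraph (V × Fin n) where
  Adj p q := G.Adj p.1 q.1 ∨ (p.1 = q.1 ∧ p.2 ≠ q.2)
  symm := by
    constructor
    rintro p q (h | ⟨h1, h2⟩)
    · exact Or.inl h.symm
    · exact Or.inr ⟨h1.symm, h2.symm⟩
  loopless := by
    constructor
    rintro p (h | ⟨_, h2⟩)
    · exact G.irrefl h
    · exact h2 rfl

open scoped Classical

lemma sum_all (n : ℕ) (x : ℝ) : ∑ A : Finset (Fin n), x ^ A.card = (1 + x) ^ n := by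
  have h := Finset.prod_add (fun _ : Fin n => x) (fun _ => 1) Finset.univ
  simp only [prod_const, one_pow, mul_one] at h
  rw [← Finset.powerset_univ, ← h, add_comm x 1, card_univ, Fintype.card_fin]

lemma sum_ne (n : ℕ) (x : ℝ) :
    ∑ A ∈ Finset.univ.filter (fun A : Finset (Fin n) => A.Nonempty), x ^ A.card
      = (1 + x) ^ n - 1 := by
  have h2 : (Finset.univ.filter (fun A : Finset (Fin n) => ¬ A.Nonempty)) = {∅} := by
    ext A; simp [Finset.not_nonempty_iff_eq_empty]
  have := Finset.sum_filter_add_sum_filter_not Finset.univ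
    (fun A : Finset (Fin n) => A.Nonempty) (fun A => x ^ A.card)
  rw [sum_all] at this
  rw [h2] at this
  simp at this
  linarith

lemma fiber_sum {V : Type*} [Fintype V] (n : ℕ) (x : ℝ) (T : Finset V) :
    ∑ S ∈ Finset.univ.powerset.filter
        (fun S : Finset (V × Fin n) => S.image Prod.fst = T), x ^ S.card
      = ((1 + x) ^ n - 1) ^ T.card := by
  classical
  induction T using Finset.induction_on with
  | empty =>
    have : Finset.univ.powerset.filter
        (fun S : Finset (V × Fin n) => S.image Prod.fst = ∅) = {∅} := by
      ext S; simp [Finset.image_eq_empty]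
    rw [this]; simp
  | @insert v T hv ih =>
    rw [Finset.card_insert_of_notMem hv, pow_succ, mul_comm, ← ih, ← sum_ne n x,
      Finset.sum_mul_sum]
    rw [← Finset.sum_product']
    refine Finset.sum_nbij'
      (i := fun S => ((S.filter (fun p => p.1 = v)).image Prod.snd,
        S.filter (fun p => p.1 ≠ v)))
      (j := fun P => P.1.image (fun i => (v, i)) ∪ P.2) ?_ ?_ ?_ ?_ ?_
    · -- maps to
      intro S hS
      simp only [Finset.mem_filter, Finset.mem_powerset] at hS
      obtain ⟨-, him⟩ := hS
      simp only [Finset.mem_product, Finset.mem_filter, Finset.mem_powerset,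
        Finset.mem_univ, true_and]
      constructor
      · -- nonempty
        have hv' : v ∈ S.image Prod.fst := by rw [him]; exact Finset.mem_insert_self v T
        obtain ⟨p, hp, hpv⟩ := Finset.mem_image.1 hv'
        exact ⟨p.2, Finset.mem_image.2 ⟨p, Finset.mem_filter.2 ⟨hp, hpv⟩, rfl⟩⟩
      · constructor
        · exact Finset.subset_univ _
        · ext u
          simp only [Finset.mem_image, Finset.mem_filter]
          constructor
          · rintro ⟨p, ⟨hp, hpv⟩, rfl⟩
            have : p.1 ∈ insert v T := by rw [← him]; exact Finset.mem_image_of_mem _ hp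
            rcases Finset.mem_insert.1 this with h | h
            · exact absurd h hpv
            · exact h
          · intro hu
            have : u ∈ insert v T := Finset.mem_insert_of_mem hu
            rw [← him] at this
            obtain ⟨p, hp, rfl⟩ := Finset.mem_image.1 this
            exact ⟨p, ⟨hp, fun h => hv (h ▸ hu)⟩, rfl⟩
    · -- j maps to
      rintro ⟨A, B⟩ hP
      simp only [Finset.mem_product, Finset.mem_filter, Finset.mem_powerset,
        Finset.mem_univ, true_and] at hP
      obtain ⟨hA, -, hB⟩ := hP
      simp only [Finset.mem_filter, Finset.mem_powerset]
      refine ⟨Finset.subset_univ _, ?_⟩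
      rw [Finset.image_union, Finset.image_image, hB]
      have : A.image ((Prod.fst : V × Fin n → V) ∘ fun i => (v, i)) = {v} := by
        rw [show ((Prod.fst : V × Fin n → V) ∘ fun i => (v, i)) = fun _ => v from rfl]
        exact Finset.image_const hA v
      rw [this]
      ext u; simp [or_comm]
    · -- left inverse
      intro S hS
      simp only
      have h1 : ((S.filter (fun p => p.1 = v)).image Prod.snd).image (fun i => (v, i))
          = S.filter (fun p => p.1 = v) := by
        rw [Finset.image_image]
        ext p
        simp only [Finset.mem_image, Finset.mem_filter, Function.comp_apply]
        constructor
        · rintro ⟨q, ⟨hq, hqv⟩, rfl⟩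
          refine ⟨?_, rfl⟩
          rw [← hqv]
          simpa using hq
        · rintro ⟨hp, rfl⟩
          exact ⟨p, ⟨hp, rfl⟩, rfl⟩
      rw [h1, Finset.filter_union_filter_not_eq]
    · -- right inverse
      rintro ⟨A, B⟩ hP
      simp only [Finset.mem_product, Finset.mem_filter, Finset.mem_powerset,
        Finset.mem_univ, true_and] at hP
      obtain ⟨hA, -, hB⟩ := hP
      have hBv : ∀ p ∈ B, p.1 ≠ v := by
        intro p hp h
        apply hv
        have : p.1 ∈ T := by rw [← hB]; exact Finset.mem_image_of_mem _ hp
        rwa [h] at this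
      have h1 : (A.image (fun i => (v, i)) ∪ B).filter (fun p : V × Fin n => p.1 = v)
          = A.image (fun i => (v, i)) := by
        rw [Finset.filter_union]
        rw [Finset.filter_eq_self.2 (by rintro p hp; obtain ⟨i, -, rfl⟩ := Finset.mem_image.1 hp; rfl)]
        rw [Finset.filter_false_of_mem (by intro p hp; exact hBv p hp), Finset.union_empty]
      have h2 : (A.image (fun i => (v, i)) ∪ B).filter (fun p : V × Fin n => p.1 ≠ v) = B := by
        rw [Finset.filter_union]
        rw [Finset.filter_eq_self.2 hBv]
        rw [Finset.filter_false_of_mem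
          (by rintro p hp h; obtain ⟨i, -, rfl⟩ := Finset.mem_image.1 hp; exact h rfl),
          Finset.empty_union]
      simp only [h1, h2, Finset.image_image]
      have : A.image ((Prod.snd : V × Fin n → Fin n) ∘ fun i => (v, i)) = A := by
        simp [Function.comp]
      rw [this]
    · -- values
      intro S hS
      simp only [Finset.mem_filter, Finset.mem_powerset] at hS
      have hinj : Set.InjOn Prod.snd ((S.filter (fun p => p.1 = v)) : Set (V × Fin n)) := by
        intro p hp q hq h
        simp only [Finset.coe_filter, Set.mem_setOf_eq] at hp hq
        exact Prod.ext (hp.2.trans hq.2.symm) h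
      simp only
      rw [← pow_add, Finset.card_image_of_injOn hinj,
        Finset.card_filter_add_card_filter_not]

lemma dom_iff {V : Type*} [Fintype V] (G : SimpleGraph V) (n : ℕ) (hn : 1 ≤ n)
    (S : Finset (V × Fin n)) :
    (∀ p : V × Fin n, p ∈ S ∨ ∃ q ∈ S, (compSub G n).Adj q p) ↔
      (∀ v : V, v ∈ S.image Prod.fst ∨ ∃ u ∈ S.image Prod.fst, G.Adj u v) := by
  constructor
  · intro h v
    rcases h (v, ⟨0, hn⟩) with hmem | ⟨q, hq, hadj⟩
    · exact Or.inl (Finset.mem_image_of_mem _ hmem)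
    · rcases hadj with hadj | ⟨heq, -⟩
      · exact Or.inr ⟨q.1, Finset.mem_image_of_mem _ hq, hadj⟩
      · exact Or.inl (by rw [← show q.1 = v from heq]; exact Finset.mem_image_of_mem _ hq)
  · intro h p
    rcases h p.1 with hmem | ⟨u, hu, hadj⟩
    · obtain ⟨q, hq, hq1⟩ := Finset.mem_image.1 hmem
      by_cases hqp : q = p
      · exact Or.inl (hqp ▸ hq)
      · refine Or.inr ⟨q, hq, Or.inr ⟨hq1, fun h2 => hqp (Prod.ext hq1 h2)⟩⟩
    · obtain ⟨q, hq, hq1⟩ := Finset.mem_image.1 hu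
      exact Or.inr ⟨q, hq, Or.inl (hq1 ▸ hadj)⟩

theorem domPoly_compSub {V : Type*} [Fintype V] (G : SimpleGraph V) (n : ℕ) (hn : 1 ≤ n)
    (x : ℝ) : domPoly (compSub G n) x = domPoly G ((1 + x) ^ n - 1) := by
  classical
  unfold domPoly
  rw [← Finset.sum_fiberwise_of_maps_to (g := fun S : Finset (V × Fin n) => S.image Prod.fst)
    (t := Finset.univ.powerset.filter
      (fun T : Finset V => ∀ v : V, v ∈ T ∨ ∃ u ∈ T, G.Adj u v)) ?_]
  · apply Finset.sum_congr rfl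
    intro T hT
    simp only [Finset.mem_filter, Finset.mem_powerset] at hT
    rw [← fiber_sum (V := V) n x T]
    refine Finset.sum_congr ?_ (fun _ _ => rfl)
    ext S
    simp only [Finset.mem_filter, Finset.mem_powerset, Finset.subset_univ, true_and]
    constructor
    · rintro ⟨-, h⟩; exact h
    · intro h
      exact ⟨(dom_iff G n hn S).2 (h ▸ hT.2), h⟩
  · intro S hS
    simp only [Finset.mem_filter, Finset.mem_powerset, Finset.subset_univ, true_and] at hS ⊢
    exact (dom_iff G n hn S).1 hS
end

section
/- For every δ ∈ (0,1), for each sufficiently large odd ℓ the polynomial f_ℓ(x) = (1+x)^ℓ(x^2+2x) + x^ℓ - 2x has a real root in the open interval (-1-δ, -1). -/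
theorem K2l_root_in_interval (δ : ℝ) (h0 : 0 < δ) (h1 : δ < 1) :
    ∃ N : ℕ, ∀ l ≥ N, Odd l →
      ∃ x : ℝ, -1 - δ < x ∧ x < -1 ∧
        (1 + x) ^ l * (x ^ 2 + 2 * x) + x ^ l - 2 * x = 0 := by
  obtain ⟨N, hN⟩ := pow_unbounded_of_one_lt (5 : ℝ) (by linarith : (1:ℝ) < 1 + δ)
  refine ⟨N, fun l hl hodd => ?_⟩
  set f : ℝ → ℝ := fun x => (1 + x) ^ l * (x ^ 2 + 2 * x) + x ^ l - 2 * x with hf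
  have hcont : ContinuousOn f (Set.Icc (-1 - δ) (-1)) := by fun_prop
  have hfb : f (-1) = 1 := by
    simp only [hf]
    rw [show (1:ℝ) + (-1) = 0 by ring, zero_pow hodd.pos.ne', hodd.neg_one_pow]
    ring
  have hpow : (5:ℝ) < (1 + δ) ^ l :=
    lt_of_lt_of_le hN (pow_le_pow_right₀ (by linarith) hl)
  have hfa : f (-1 - δ) < 0 := by
    have heq : f (-1 - δ) = δ ^ l * (1 - δ ^ 2) - (1 + δ) ^ l + 2 + 2 * δ := by
      simp only [hf]
      rw [show (1:ℝ) + (-1 - δ) = -δ by ring, show (-1 - δ : ℝ) = -(1 + δ) by ring,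
        hodd.neg_pow, hodd.neg_pow]
      ring
    have hd1 : δ ^ l ≤ 1 := pow_le_one₀ h0.le h1.le
    have hd0 : 0 ≤ δ ^ l := pow_nonneg h0.le l
    have hsq : 0 ≤ δ ^ 2 := sq_nonneg δ
    nlinarith [mul_le_one₀ hd1 (by nlinarith : (0:ℝ) ≤ 1 - δ ^ 2) (by nlinarith : (1:ℝ) - δ ^ 2 ≤ 1)]
  have h0mem : (0:ℝ) ∈ Set.Ioo (f (-1 - δ)) (f (-1)) := by
    rw [hfb]; exact ⟨hfa, one_pos⟩
  obtain ⟨x, hx, hfx⟩ := intermediate_value_Ioo (by linarith : (-1 - δ : ℝ) ≤ -1) hcont h0mem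
  exact ⟨x, hx.1, hx.2, hfx⟩
end

section
/- For every δ ∈ (0,1) and every sufficiently large odd k, the polynomial g_k(x) = (1+x)^{2k} - 2(1+x)^k + 2x^k + 1 has a real root in the open interval (-1, -1+δ). -/
theorem Kkk_root_in_interval (δ : ℝ) (h0 : 0 < δ) (h1 : δ < 1) :
    ∃ N : ℕ, ∀ k ≥ N, Odd k →
      ∃ x : ℝ, -1 < x ∧ x < -1 + δ ∧
        (1 + x) ^ (2 * k) - 2 * (1 + x) ^ k + 2 * x ^ k + 1 = 0 := by
  set a : ℝ := δ / 2 with ha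
  have ha0 : 0 < a := by positivity
  have ha1 : a < 1 := by simp [ha]; linarith
  have hb0 : (0:ℝ) ≤ 1 - a := by linarith
  have hb1 : 1 - a < 1 := by linarith
  have ht : Filter.Tendsto (fun k : ℕ => 2 * a ^ k + 2 * (1 - a) ^ k)
      Filter.atTop (nhds 0) := by
    have h1t := tendsto_pow_atTop_nhds_zero_of_lt_one ha0.le ha1
    have h2t := tendsto_pow_atTop_nhds_zero_of_lt_one hb0 hb1
    have := ((h1t.const_mul 2).add (h2t.const_mul 2))
    simpa using this
  have hev : ∀ᶠ k : ℕ in Filter.atTop, 2 * a ^ k + 2 * (1 - a) ^ k < 1 :=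
    ht.eventually_lt_const (by norm_num)
  obtain ⟨N, hN⟩ := Filter.eventually_atTop.mp hev
  refine ⟨N, fun k hk hodd => ?_⟩
  set g : ℝ → ℝ := fun x => (1 + x) ^ (2 * k) - 2 * (1 + x) ^ k + 2 * x ^ k + 1 with hg
  have hkpos : 0 < k := hodd.pos
  have hgl : g (-1) = -1 := by
    simp [hg, zero_pow (by omega : 2 * k ≠ 0), zero_pow (by omega : k ≠ 0),
      hodd.neg_one_pow]; norm_num
  have hgr : 0 < g (-1 + a) := by
    have hx : (-1 + a) ^ k = -(1 - a) ^ k := by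
      have : (-1 + a : ℝ) = -(1 - a) := by ring
      rw [this, hodd.neg_pow]
    have h1a : (1 + (-1 + a) : ℝ) = a := by ring
    have key := hN k hk
    have hpow : (0:ℝ) ≤ a ^ (2 * k) := by positivity
    simp only [hg, h1a, hx]
    nlinarith [pow_nonneg ha0.le (2*k)]
  have hcont : ContinuousOn g (Set.Icc (-1) (-1 + a)) := by
    fun_prop
  have hle : (-1 : ℝ) ≤ -1 + a := by linarith
  have hmem : (0:ℝ) ∈ Set.Ioo (g (-1)) (g (-1 + a)) := by
    constructor <;> [rw [hgl]; skip] <;> [norm_num; exact hgr]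
  obtain ⟨x, hx, hgx⟩ := intermediate_value_Ioo hle hcont hmem
  exact ⟨x, hx.1, by linarith [hx.2, ha0, ha1, h1], hgx⟩
end

section
/- Let r_k denote the unique root of g_k(R) = R(R-1)^k - R^k in (1, ∞). Then r_{k+1} > r_k for all k ≥ 2. -/
theorem gk_roots_increasing (k : ℕ) (hk : 2 ≤ k) (r s : ℝ)
    (hr : 1 < r ∧ r * (r - 1) ^ k - r ^ k = 0)
    (hs : 1 < s ∧ s * (s - 1) ^ (k + 1) - s ^ (k + 1) = 0) :
    r < s := by
  obtain ⟨hr1, hre⟩ := hr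
  obtain ⟨hs1, hse⟩ := hs
  have hrpos : (0:ℝ) < r := by linarith
  have hspos : (0:ℝ) < s := by linarith
  set u := 1/r with hu_def
  set v := 1/s with hv_def
  have hu0 : 0 < u := by positivity
  have hv0 : 0 < v := by positivity
  have hu1 : u < 1 := by rw [hu_def]; rw [div_lt_one hrpos]; linarith
  have hv1 : v < 1 := by rw [hv_def]; rw [div_lt_one hspos]; linarith
  have ha : (1 - u) ^ k = u := by
    have h1 : (1:ℝ) - u = (r - 1)/r := by rw [hu_def]; field_simp
    rw [h1, div_pow, hu_def, div_eq_div_iff (by positivity : (r:ℝ)^k ≠ 0) hrpos.ne']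
    linear_combination hre
  have hb : (1 - v) ^ (k+1) = v := by
    have h1 : (1:ℝ) - v = (s - 1)/s := by rw [hv_def]; field_simp
    rw [h1, div_pow, hv_def, div_eq_div_iff (by positivity : (s:ℝ)^(k+1) ≠ 0) hspos.ne']
    linear_combination hse
  by_contra h
  push_neg at h
  have huv : u ≤ v := by
    rw [hu_def, hv_def]
    exact one_div_le_one_div_of_le hspos h
  have h1 : (1 - v) ^ (k+1) < (1 - v) ^ k := by
    rw [pow_succ]
    exact mul_lt_of_lt_one_right (pow_pos (by linarith) k) (by linarith)
  have h2 : (1 - v) ^ k ≤ (1 - u) ^ k :=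
    pow_le_pow_left₀ (by linarith) (by linarith) k
  linarith [ha, hb, h1, h2]
end

section
/- The sequence r_k of unique roots of g_k(R) = R(R-1)^k - R^k in (1,∞) tends to infinity as k → ∞. -/
theorem gk_roots_tendsto_atTop (r : ℕ → ℝ)
    (h : ∀ k ≥ 2, 1 < r k ∧ r k * (r k - 1) ^ k - (r k) ^ k = 0) :
    Filter.Tendsto r Filter.atTop Filter.atTop := by
  rw [Filter.tendsto_atTop]
  intro M
  set M' : ℝ := max M 2 with hM'
  have hM2 : (2:ℝ) ≤ M' := le_max_right _ _
  have hMM : M ≤ M' := le_max_left _ _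
  have hM0 : (0:ℝ) < M' := by linarith
  have hinv : (0:ℝ) < 1 / M' := by positivity
  have h1 : |1 - 1/M'| < 1 := by
    rw [abs_lt]
    constructor
    · have : 1/M' ≤ 1/2 := by
        apply one_div_le_one_div_of_le <;> linarith
      linarith
    · linarith
  have htend : Filter.Tendsto (fun k => (1 - 1/M')^k) Filter.atTop (nhds 0) :=
    tendsto_pow_atTop_nhds_zero_of_abs_lt_one h1
  have hev : ∀ᶠ k in Filter.atTop, (1 - 1/M')^k < 1/M' :=
    htend.eventually_lt_const hinv
  obtain ⟨N, hN⟩ := Filter.eventually_atTop.mp hev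
  refine Filter.eventually_atTop.mpr ⟨max N 2, fun k hk => ?_⟩
  have hkN : N ≤ k := le_trans (le_max_left _ _) hk
  have hk2 : 2 ≤ k := le_trans (le_max_right _ _) hk
  obtain ⟨hr1, heq⟩ := h k hk2
  have hr0 : (0:ℝ) < r k := by linarith
  by_contra hle
  push_neg at hle
  have hrM : r k ≤ M' := le_trans hle.le hMM
  have hsub : r k - 1 ≤ (1 - 1/M') * r k := by
    have : r k / M' ≤ 1 := (div_le_one hM0).mpr hrM
    have h2 : (1 - 1/M') * r k = r k - r k / M' := by ring
    linarith
  have hsub0 : (0:ℝ) ≤ r k - 1 := by linarith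
  have hpow : (r k - 1)^k ≤ ((1 - 1/M') * r k)^k := pow_le_pow_left₀ hsub0 hsub k
  have hrk0 : (0:ℝ) < (r k)^k := pow_pos hr0 k
  have hmain : (r k)^k < (r k)^k := by
    calc (r k)^k = r k * (r k - 1)^k := by linarith
    _ ≤ r k * ((1 - 1/M')^k * (r k)^k) := by
        have : ((1 - 1/M') * r k)^k = (1 - 1/M')^k * (r k)^k := mul_pow _ _ _
        nlinarith
    _ < r k * ((1/M') * (r k)^k) := by
        have := hN k hkN
        have h3 : (1 - 1/M')^k * (r k)^k < (1/M') * (r k)^k := by nlinarith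
        nlinarith
    _ ≤ (r k)^k := by
        have h4 : r k * (1/M') ≤ 1 := by
          rw [mul_one_div, div_le_one hM0]; exact hrM
        nlinarith
  exact lt_irrefl _ hmain
end

section
/- For the sequence r_k of unique roots of g_k(R) = R(R-1)^k - R^k in (1,∞), the differences r_{k+1} - r_k are eventually bounded above by 4. -/
theorem gk_root_gaps_bounded :
    ∃ N : ℕ, ∀ k ≥ N, 2 ≤ k → ∀ r s : ℝ,
      (1 < r ∧ r * (r - 1) ^ k - r ^ k = 0) →
      (1 < s ∧ s * (s - 1) ^ (k + 1) - s ^ (k + 1) = 0) →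
      s - r ≤ 4 := by
  use 2
  rintro k _ hk2 r s ⟨hr1, hre⟩ ⟨hs1, hse⟩
  by_contra hcon
  push_neg at hcon
  have hs4 : r + 4 < s := by linarith
  have hrpos : (0:ℝ) < r := by linarith
  have hspos : (0:ℝ) < s := by linarith
  -- (r-1)^k = r^(k-1)
  have hr' : (r-1)^k = r^(k-1) := by
    have hk : k - 1 + 1 = k := by omega
    have h : r * (r-1)^k = r * r^(k-1) := by
      have : r * r^(k-1) = r^k := by
        rw [← pow_succ', hk]
      rw [this]; linarith
    exact mul_left_cancel₀ (ne_of_gt hrpos) h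
  have hr2 : 2 < r := by
    by_contra h
    push_neg at h
    have h1 : (r-1)^k ≤ 1 := pow_le_one₀ (by linarith) (by linarith)
    have h2 : 1 < r^(k-1) := one_lt_pow₀ hr1 (by omega)
    rw [hr'] at h1; linarith
  -- (s-1)^(k+1) = s^k
  have hs' : (s-1)^(k+1) = s^k := by
    have h : s * (s-1)^(k+1) = s * s^k := by
      rw [← pow_succ']; linarith
    exact mul_left_cancel₀ (ne_of_gt hspos) h
  -- k ≤ r log r
  have hrm1 : (0:ℝ) < r - 1 := by linarith
  have hlog : (k:ℝ) * Real.log (r-1) = ((k:ℝ)-1) * Real.log r := by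
    have h := congrArg Real.log hr'
    rw [Real.log_pow, Real.log_pow] at h
    push_cast [Nat.cast_sub (show 1 ≤ k by omega)] at h
    exact h
  have hgap : 1/r ≤ Real.log r - Real.log (r-1) := by
    have h := Real.log_le_sub_one_of_pos (show 0 < (r-1)/r by positivity)
    rw [Real.log_div (ne_of_gt hrm1) (ne_of_gt hrpos)] at h
    have h2 : (r-1)/r - 1 = -(1/r) := by field_simp; ring
    rw [h2] at h; linarith
  have hklog : (k:ℝ) ≤ r * Real.log r := by
    have h2 : (k:ℝ) * (Real.log r - Real.log (r-1)) = Real.log r := by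
      linear_combination -hlog
    have hk0 : (0:ℝ) ≤ (k:ℝ) := Nat.cast_nonneg k
    have h3 : (k:ℝ) * (1/r) ≤ Real.log r := by
      calc (k:ℝ) * (1/r) ≤ (k:ℝ) * (Real.log r - Real.log (r-1)) :=
            mul_le_mul_of_nonneg_left hgap hk0
        _ = Real.log r := h2
    have h4 : (k:ℝ) * (1/r) = (k:ℝ)/r := by ring
    rw [h4, div_le_iff₀ hrpos] at h3
    linarith
  -- (r+4)^k ≤ (r+3)^(k+1)
  have h3pos : (0:ℝ) < r + 3 := by linarith
  have hC : (r+4)^k ≤ (r+3)^(k+1) := by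
    have e1 : (1 + 1/(r+3)) ≤ Real.exp (1/(r+3)) := by
      have := Real.add_one_le_exp (1/(r+3)); linarith
    have e2 : (1 + 1/(r+3))^k ≤ Real.exp ((k:ℝ)/(r+3)) := by
      calc (1+1/(r+3))^k ≤ (Real.exp (1/(r+3)))^k :=
            pow_le_pow_left₀ (by positivity) e1 k
        _ = Real.exp ((k:ℝ)*(1/(r+3))) := by rw [← Real.exp_nat_mul]
        _ = Real.exp ((k:ℝ)/(r+3)) := by ring_nf
    have hlr : (0:ℝ) ≤ Real.log r := Real.log_nonneg (by linarith)
    have e3 : Real.exp ((k:ℝ)/(r+3)) ≤ r := by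
      have h : (k:ℝ)/(r+3) ≤ Real.log r := by
        rw [div_le_iff₀ h3pos]; nlinarith
      calc Real.exp ((k:ℝ)/(r+3)) ≤ Real.exp (Real.log r) := Real.exp_le_exp.mpr h
        _ = r := Real.exp_log hrpos
    have e4 : (r+4) = (r+3)*(1+1/(r+3)) := by field_simp; ring
    have hpow3 : (0:ℝ) ≤ (r+3)^k := le_of_lt (pow_pos h3pos k)
    calc (r+4)^k = (r+3)^k * (1+1/(r+3))^k := by rw [e4, mul_pow]
      _ ≤ (r+3)^k * r := mul_le_mul_of_nonneg_left (e2.trans e3) hpow3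
      _ ≤ (r+3)^k * (r+3) := mul_le_mul_of_nonneg_left (by linarith) hpow3
      _ = (r+3)^(k+1) := (pow_succ _ _).symm
  -- contradiction
  have key1 : (s*(r+3))^(k+1) < ((s-1)*(r+4))^(k+1) := by
    apply pow_lt_pow_left₀ (by nlinarith) (by positivity)
    omega
  have keq : ((s-1)*(r+4))^(k+1) = s^k * (r+4)^(k+1) := by
    rw [mul_pow, hs']
  have key2 : s^k * (r+4)^(k+1) ≤ s^k * ((r+3)^(k+1) * (r+4)) := by
    apply mul_le_mul_of_nonneg_left _ (le_of_lt (pow_pos hspos k))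
    rw [pow_succ]
    exact mul_le_mul_of_nonneg_right hC (by linarith)
  have hfinal : s * (s^k * (r+3)^(k+1)) < (r+4) * (s^k * (r+3)^(k+1)) := by
    have hl : (s*(r+3))^(k+1) = s * (s^k * (r+3)^(k+1)) := by
      rw [mul_pow, pow_succ]; ring
    have hr2' : s^k * ((r+3)^(k+1) * (r+4)) = (r+4) * (s^k * (r+3)^(k+1)) := by ring
    calc s * (s^k * (r+3)^(k+1)) = (s*(r+3))^(k+1) := hl.symm
      _ < ((s-1)*(r+4))^(k+1) := key1
      _ = s^k * (r+4)^(k+1) := keq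
      _ ≤ s^k * ((r+3)^(k+1) * (r+4)) := key2
      _ = (r+4) * (s^k * (r+3)^(k+1)) := hr2'
  have hposfac : (0:ℝ) < s^k * (r+3)^(k+1) := by positivity
  have : s < r + 4 := lt_of_mul_lt_mul_right
    (by simpa [mul_comm] using hfinal) (le_of_lt hposfac)
  linarith
end
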